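/- Fix integers m ≥ 1 and M ≥ 2, and define P₆ : ((Fin (m+1) × Fin M) → ℝ) → ℝ by P₆(p) = Σ_{b ∈ ℤ, M ∣ b} [f_p³ · f̄_p³]_{(0,b)}. Then P₆ is differentiable at every p, and for all i ∈ {0,…,m} and j ∈ {0,…,M−1}, the partial derivative of P₆ with respect to the coordinate p(i,j) equals 6 · Σ_{b ∈ ℤ, M ∣ b} [f_p³ · f̄_p²]_{(i, b+j)}, where j is cast to ℤ. -/

import Mathlib

/-- `f_{p,a}`: the Laurent polynomial `Σ_{i,j} p(i,j) X^{a·i} Y^{a·j}` in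
`AddMonoidAlgebra ℝ (ℤ × ℤ)`; `fpa p 1 = f_p` and `fpa p (-1) = f̄_p`. -/
noncomputable def fpa {m M : ℕ} (p : Fin (m + 1) × Fin M → ℝ) (a : ℤ) :
    AddMonoidAlgebra ℝ (ℤ × ℤ) :=
  ∑ ij : Fin (m + 1) × Fin M,
    AddMonoidAlgebra.single (a * (ij.1 : ℤ), a * (ij.2 : ℤ)) (p ij)

/-- `P₆(p) = Σ_{b ∈ ℤ, M ∣ b} [f_p³ · f̄_p³]_{(0,b)}`. -/
noncomputable def P6 (m M : ℕ) (p : Fin (m + 1) × Fin M → ℝ) : ℝ :=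
  ∑ᶠ (b : ℤ) (_ : (M : ℤ) ∣ b), ((fpa p 1) ^ 3 * (fpa p (-1)) ^ 3).coeff (0, b)

open scoped Classical

namespace Stmt9Aux

/-- The linear functional `g ↦ Σ_{b : M ∣ b} g (0, b)`. -/
noncomputable def S (M : ℕ) (g : AddMonoidAlgebra ℝ (ℤ × ℤ)) : ℝ :=
  ∑ᶠ b : ℤ, if (M : ℤ) ∣ b then g.coeff (0, b) else 0

lemma S_support_finite (M : ℕ) (g : AddMonoidAlgebra ℝ (ℤ × ℤ)) :
    (Function.support fun b : ℤ => if (M : ℤ) ∣ b then g.coeff (0, b) else 0).Finite := by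
  apply Set.Finite.subset (g.coeff.support.image Prod.snd).finite_toSet
  intro b hb
  have hg : g.coeff (0, b) ≠ 0 := by
    intro h
    apply hb
    simp [Function.mem_support, h]
  simp only [Finset.coe_image, Set.mem_image, Finset.mem_coe, Finsupp.mem_support_iff]
  exact ⟨(0, b), hg, rfl⟩

lemma S_add (M : ℕ) (g h : AddMonoidAlgebra ℝ (ℤ × ℤ)) :
    S M (g + h) = S M g + S M h := by
  unfold S
  rw [← finsum_add_distrib (S_support_finite M g) (S_support_finite M h)]
  refine finsum_congr fun b => ?_
  by_cases hb : (M : ℤ) ∣ b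
  · rw [if_pos hb, if_pos hb, if_pos hb]
    exact Finsupp.add_apply g.coeff h.coeff (0, b)
  · simp [hb]

/-- `S` bundled as an additive monoid hom. -/
noncomputable def Shom (M : ℕ) : AddMonoidAlgebra ℝ (ℤ × ℤ) →+ ℝ where
  toFun := S M
  map_zero' := by simp [S]
  map_add' := S_add M

lemma Shom_apply (M : ℕ) (g : AddMonoidAlgebra ℝ (ℤ × ℤ)) : Shom M g = S M g := rfl

lemma Shom_single (M : ℕ) (u : ℤ × ℤ) (r : ℝ) :
    Shom M (AddMonoidAlgebra.single u r) = if u.1 = 0 ∧ (M : ℤ) ∣ u.2 then r else 0 := by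
  obtain ⟨u1, u2⟩ := u
  rw [Shom_apply]
  unfold S
  rw [finsum_eq_single _ u2]
  · by_cases h1 : u1 = 0 <;> by_cases h2 : (M : ℤ) ∣ u2 <;>
      simp [AddMonoidAlgebra.coeff_single_apply, Prod.ext_iff, h1, h2]
  · intro b hb
    have hne : ((u1, u2) : ℤ × ℤ) ≠ (0, b) := by
      intro hh
      exact hb (congrArg Prod.snd hh).symm
    simp [AddMonoidAlgebra.coeff_single_apply, hne]

/-- The sign pattern of the six factors `f³ f̄³`. -/
def ee : Fin 6 → ℤ := ![1, 1, 1, -1, -1, -1]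

lemma ee0 : ee 0 = 1 := rfl
lemma ee1 : ee 1 = 1 := rfl
lemma ee2 : ee 2 = 1 := rfl
lemma ee3 : ee 3 = -1 := rfl
lemma ee4 : ee 4 = -1 := rfl
lemma ee5 : ee 5 = -1 := rfl

/-- The condition on a 6-tuple of monomials to contribute to `P₆`. -/
def cond (M : ℕ) {m : ℕ} (t : Fin 6 → Fin (m + 1) × Fin M) : Prop :=
  (∑ k, ee k * ((t k).1 : ℤ)) = 0 ∧ (M : ℤ) ∣ ∑ k, ee k * ((t k).2 : ℤ)

variable {m M : ℕ}

lemma expand (q : Fin 6 → (Fin (m + 1) × Fin M → ℝ)) :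
    Shom M (∏ k, fpa (q k) (ee k)) =
      ∑ t : Fin 6 → Fin (m + 1) × Fin M,
        if cond M t then ∏ k, q k (t k) else 0 := by
  unfold fpa
  rw [Fintype.prod_sum
      (fun (k : Fin 6) (ij : Fin (m + 1) × Fin M) =>
        AddMonoidAlgebra.single (ee k * (ij.1 : ℤ), ee k * (ij.2 : ℤ)) (q k ij)),
    map_sum]
  refine Finset.sum_congr rfl fun t _ => ?_
  rw [AddMonoidAlgebra.prod_single, Shom_single]
  refine if_congr ?_ rfl rfl
  unfold cond
  rw [Prod.fst_sum, Prod.snd_sum]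

lemma prod_ee (p : Fin (m + 1) × Fin M → ℝ) :
    (∏ k, fpa p (ee k)) = (fpa p 1) ^ 3 * (fpa p (-1)) ^ 3 := by
  rw [Fin.prod_univ_six]
  show fpa p 1 * fpa p 1 * fpa p 1 * fpa p (-1) * fpa p (-1) * fpa p (-1) = _
  ring

lemma P6_eq_Shom (p : Fin (m + 1) × Fin M → ℝ) :
    P6 m M p = Shom M ((fpa p 1) ^ 3 * (fpa p (-1)) ^ 3) := by
  rw [Shom_apply]
  unfold P6 S
  exact finsum_congr fun b => finsum_eq_if

lemma P6_explicit (p : Fin (m + 1) × Fin M → ℝ) :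
    P6 m M p =
      ∑ t : Fin 6 → Fin (m + 1) × Fin M,
        (if cond M t then (1 : ℝ) else 0) * ∏ k, p (t k) := by
  rw [P6_eq_Shom, ← prod_ee, expand (fun _ => p)]
  refine Finset.sum_congr rfl fun t _ => ?_
  by_cases h : cond M t <;> simp [h]

/-- The candidate derivative of `P6` at `p`. -/
noncomputable def D (p : Fin (m + 1) × Fin M → ℝ) :
    (Fin (m + 1) × Fin M → ℝ) →L[ℝ] ℝ :=
  ∑ t : Fin 6 → Fin (m + 1) × Fin M,
    (if cond M t then (1 : ℝ) else 0) •
      (∑ k, (∏ l ∈ Finset.univ.erase k, p (t l)) •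
        ContinuousLinearMap.proj (R := ℝ) (φ := fun _ : Fin (m + 1) × Fin M => ℝ) (t k))

lemma hasFDerivAt_P6 (p : Fin (m + 1) × Fin M → ℝ) :
    HasFDerivAt (P6 m M) (D p) p := by
  have hfun : P6 m M = fun p : Fin (m + 1) × Fin M → ℝ =>
      ∑ t : Fin 6 → Fin (m + 1) × Fin M,
        (if cond M t then (1 : ℝ) else 0) * ∏ k ∈ Finset.univ, p (t k) :=
    funext fun p => P6_explicit p
  rw [hfun]
  unfold D
  apply HasFDerivAt.fun_sum
  intro t _
  exact ((HasFDerivAt.finset_prod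
      (fun k _ => hasFDerivAt_apply (t k) p)).const_mul _)

lemma fpa_pisingle (i : Fin (m + 1)) (j : Fin M) (a : ℤ) :
    fpa (Pi.single ((i, j)) (1 : ℝ)) a
      = AddMonoidAlgebra.single (a * (i : ℤ), a * (j : ℤ)) 1 := by
  unfold fpa
  rw [Finset.sum_eq_single (i, j)]
  · simp
  · intro ij _ hij
    rw [Pi.single_eq_of_ne hij]
    simp
  · simp

lemma claim1 (p : Fin (m + 1) × Fin M → ℝ) (v : Fin (m + 1) × Fin M → ℝ) :
    D p v = ∑ k : Fin 6,
      Shom M (∏ k', fpa (Function.update (fun _ => p) k v k') (ee k')) := by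
  have hrhs : ∀ k : Fin 6,
      Shom M (∏ k', fpa (Function.update (fun _ => p) k v k') (ee k')) =
        ∑ t : Fin 6 → Fin (m + 1) × Fin M,
          if cond M t then ∏ k', Function.update (fun _ => p) k v k' (t k') else 0 :=
    fun k => expand _
  unfold D
  rw [ContinuousLinearMap.sum_apply]
  simp only [hrhs]
  rw [Finset.sum_comm]
  refine Finset.sum_congr rfl fun t _ => ?_
  rw [ContinuousLinearMap.smul_apply, ContinuousLinearMap.sum_apply]
  by_cases h : cond M t
  · simp only [if_pos h, one_smul]
    refine Finset.sum_congr rfl fun k _ => ?_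
    have e1 : (∏ k' : Fin 6, Function.update (fun _ => p) k v k' (t k'))
        = v (t k) * ∏ l ∈ Finset.univ.erase k, p (t l) := by
      rw [← Finset.mul_prod_erase Finset.univ
        (fun k' => Function.update (fun _ => p) k v k' (t k')) (Finset.mem_univ k)]
      congr 1
      · rw [Function.update_self]
      · refine Finset.prod_congr rfl fun l hl => ?_
        simp [Function.update_of_ne (Finset.mem_erase.1 hl).1]
    rw [e1, ContinuousLinearMap.smul_apply, ContinuousLinearMap.proj_apply,
      smul_eq_mul, mul_comm]
  · simp [h]

/-- The target sum `T`. -/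
noncomputable def T (p : Fin (m + 1) × Fin M → ℝ) (i : Fin (m + 1)) (j : Fin M) : ℝ :=
  ∑ᶠ b : ℤ, if (M : ℤ) ∣ b then
    ((fpa p 1) ^ 3 * (fpa p (-1)) ^ 2).coeff ((i : ℤ), b + (j : ℤ)) else 0

lemma termR (p : Fin (m + 1) × Fin M → ℝ) (i : Fin (m + 1)) (j : Fin M) :
    Shom M ((fpa p 1) ^ 3 * (fpa p (-1)) ^ 2 *
        AddMonoidAlgebra.single (-(i : ℤ), -(j : ℤ)) 1) = T p i j := by
  rw [Shom_apply]
  unfold S T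
  refine finsum_congr fun b => ?_
  refine if_congr Iff.rfl ?_ rfl
  rw [AddMonoidAlgebra.coeff_mul_single_apply, mul_one]
  congr 1
  simp only [Prod.neg_mk, Prod.mk_add_mk, Prod.mk.injEq]
  constructor <;> ring

lemma termL (p : Fin (m + 1) × Fin M → ℝ) (i : Fin (m + 1)) (j : Fin M) :
    Shom M (AddMonoidAlgebra.single ((i : ℤ), (j : ℤ)) 1 *
        ((fpa p 1) ^ 2 * (fpa p (-1)) ^ 3)) = T p i j := by
  set τ : AddMonoidAlgebra ℝ (ℤ × ℤ) ≃ₐ[ℝ] AddMonoidAlgebra ℝ (ℤ × ℤ) :=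
    AddMonoidAlgebra.domCongr ℝ ℝ (AddEquiv.neg (ℤ × ℤ)) with hτ
  have hfpa : ∀ a : ℤ, τ (fpa p a) = fpa p (-a) := by
    intro a
    unfold fpa
    rw [map_sum]
    refine Finset.sum_congr rfl fun ij _ => ?_
    rw [hτ, AddMonoidAlgebra.domCongr_single]
    congr 1
    simp [Prod.ext_iff, neg_mul]
  have hswap : (fpa p 1) ^ 2 * (fpa p (-1)) ^ 3 =
      τ ((fpa p 1) ^ 3 * (fpa p (-1)) ^ 2) := by
    rw [map_mul, map_pow, map_pow, hfpa 1, hfpa (-1), neg_neg]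
    ring
  have key : ∀ x : ℤ × ℤ,
      ((fpa p 1) ^ 2 * (fpa p (-1)) ^ 3).coeff x =
        ((fpa p 1) ^ 3 * (fpa p (-1)) ^ 2).coeff (-x) := by
    intro x
    rw [hswap, hτ, AddMonoidAlgebra.coeff_domCongr]
    rfl
  rw [Shom_apply]
  unfold S T
  have step : ∀ b : ℤ,
      (if (M : ℤ) ∣ b then
          (AddMonoidAlgebra.single ((i : ℤ), (j : ℤ)) (1 : ℝ) *
            ((fpa p 1) ^ 2 * (fpa p (-1)) ^ 3) : AddMonoidAlgebra ℝ (ℤ × ℤ)).coeff (0, b) else 0) =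
        (if (M : ℤ) ∣ b then
          ((fpa p 1) ^ 3 * (fpa p (-1)) ^ 2).coeff ((i : ℤ), (j : ℤ) - b) else 0) := by
    intro b
    refine if_congr Iff.rfl ?_ rfl
    rw [AddMonoidAlgebra.coeff_single_mul_apply, one_mul, key]
    congr 1
    simp only [Prod.neg_mk, Prod.mk_add_mk, Prod.mk.injEq]
    constructor <;> ring
  simp only [step]
  refine Eq.trans (finsum_comp_equiv (Equiv.neg ℤ)).symm (finsum_congr fun b => ?_)
  rw [Equiv.neg_apply, sub_neg_eq_add]
  exact if_congr dvd_neg (by rw [add_comm (j : ℤ) b]) rfl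

end Stmt9Aux

open Stmt9Aux

/-- `P₆` is differentiable everywhere and its partial derivative with
respect to the coordinate `p(i,j)` is `6 · Σ_{b ∈ ℤ, M ∣ b} [f_p³ · f̄_p²]_{(i, b+j)}`. -/
theorem stmt9 {m M : ℕ} (hm : 1 ≤ m) (hM : 2 ≤ M) :
    Differentiable ℝ (P6 m M) ∧
    ∀ (p : Fin (m + 1) × Fin M → ℝ) (i : Fin (m + 1)) (j : Fin M),
      fderiv ℝ (P6 m M) p (Pi.single (i, j) 1) =
        6 * ∑ᶠ (b : ℤ) (_ : (M : ℤ) ∣ b),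
          ((fpa p 1) ^ 3 * (fpa p (-1)) ^ 2).coeff ((i : ℤ), b + (j : ℤ)) := by
  constructor
  · exact fun p => (hasFDerivAt_P6 p).differentiableAt
  · intro p i j
    rw [(hasFDerivAt_P6 p).fderiv]
    set v : Fin (m + 1) × Fin M → ℝ := Pi.single (i, j) 1 with hv
    rw [claim1 p v]
    have hRHS : ∑ᶠ (b : ℤ) (_ : (M : ℤ) ∣ b),
        ((fpa p 1) ^ 3 * (fpa p (-1)) ^ 2).coeff ((i : ℤ), b + (j : ℤ)) = T p i j := by
      unfold T
      exact finsum_congr fun b => finsum_eq_if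
    rw [hRHS]
    have hupd : ∀ k : Fin 6,
        (fun k' => fpa (Function.update (fun _ => p) k v k') (ee k')) =
          Function.update (fun k' => fpa p (ee k')) k (fpa v (ee k)) := by
      intro k
      funext k'
      rcases eq_or_ne k' k with rfl | h
      · simp
      · simp [Function.update_of_ne h]
    have hL : ∀ k : Fin 6, k = 0 ∨ k = 1 ∨ k = 2 →
        Shom M (∏ k', fpa (Function.update (fun _ => p) k v k') (ee k')) = T p i j := by
      intro k hk
      have hprod : (∏ k', fpa (Function.update (fun _ => p) k v k') (ee k')) =
          AddMonoidAlgebra.single ((i : ℤ), (j : ℤ)) 1 *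
            ((fpa p 1) ^ 2 * (fpa p (-1)) ^ 3) := by
        rw [show (fun k' => fpa (Function.update (fun _ => p) k v k') (ee k')) =
            Function.update (fun k' => fpa p (ee k')) k (fpa v (ee k)) from hupd k]
        rw [Fin.prod_univ_six]
        rcases hk with rfl | rfl | rfl <;>
          · simp [hv, fpa_pisingle, ee0, ee1, ee2, ee3, ee4, ee5]
            ring
      rw [hprod, termL]
    have hR : ∀ k : Fin 6, k = 3 ∨ k = 4 ∨ k = 5 →
        Shom M (∏ k', fpa (Function.update (fun _ => p) k v k') (ee k')) = T p i j := by
      intro k hk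
      have hprod : (∏ k', fpa (Function.update (fun _ => p) k v k') (ee k')) =
          (fpa p 1) ^ 3 * (fpa p (-1)) ^ 2 *
            AddMonoidAlgebra.single (-(i : ℤ), -(j : ℤ)) 1 := by
        rw [show (fun k' => fpa (Function.update (fun _ => p) k v k') (ee k')) =
            Function.update (fun k' => fpa p (ee k')) k (fpa v (ee k)) from hupd k]
        rw [Fin.prod_univ_six]
        rcases hk with rfl | rfl | rfl <;>
          · simp [hv, fpa_pisingle, ee0, ee1, ee2, ee3, ee4, ee5]
            ring
      rw [hprod, termR]
    rw [Fin.sum_univ_six]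
    rw [hL 0 (by norm_num), hL 1 (by norm_num), hL 2 (by norm_num),
      hR 3 (by norm_num), hR 4 (by norm_num), hR 5 (by norm_num)]
    ring
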